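/- Let a² ≥ 0, b² > 0, c² > 0 and s₊ = (b² + √(b⁴ + 24a²c²))/(4c²). Let n be a unit vector in ℝ³, Q_* = s₊(n⊗n − I₃/3), and let P be a symmetric traceless 3×3 real matrix having n as an eigenvector. Then b² s₊ |P|² + 2 s₊ (c² s₊ − b²) (Pn·n)² ≥ min(2a² + (b²/3)s₊, b² s₊) |P|², where |P|² = tr(P²) is the squared Frobenius norm. In particular, the linear map P ↦ b² s₊ P + 2(c² s₊ − b²)(Pn·n) Q_* is a monotone (coercive) operator on the space of symmetric traceless matrices commuting with Q_*. -/

import Mathlib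

noncomputable section

open Matrix

namespace LdGStmt6

/-- Coercivity of the transversal linearized operator: with
`s₊ = (b² + √(b⁴ + 24a²c²))/(4c²)`, for any unit vector `n` and any symmetric traceless
`3×3` matrix `P` having `n` as an eigenvector,
`b² s₊ |P|² + 2 s₊ (c² s₊ − b²)(Pn·n)² ≥ min(2a² + (b²/3)s₊, b² s₊) |P|²`. -/
theorem stmt_6 (a2 b2 c2 : ℝ) (ha : 0 ≤ a2) (hb : 0 < b2) (hc : 0 < c2)
    (s : ℝ) (hs : s = (b2 + Real.sqrt (b2 ^ 2 + 24 * a2 * c2)) / (4 * c2))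
    (n : Fin 3 → ℝ) (hn : n ⬝ᵥ n = 1)
    (P : Matrix (Fin 3) (Fin 3) ℝ) (hP : Pᵀ = P) (htr : P.trace = 0)
    (heig : ∃ μ : ℝ, P.mulVec n = μ • n) :
    b2 * s * (P * P).trace + 2 * s * (c2 * s - b2) * (P.mulVec n ⬝ᵥ n) ^ 2
      ≥ min (2 * a2 + (b2 / 3) * s) (b2 * s) * (P * P).trace := by
  obtain ⟨μ, hμ⟩ := heig
  -- basic facts about s
  have hr0 : (0:ℝ) ≤ b2 ^ 2 + 24 * a2 * c2 := by positivity
  have hr : Real.sqrt (b2 ^ 2 + 24 * a2 * c2) ^ 2 = b2 ^ 2 + 24 * a2 * c2 :=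
    Real.sq_sqrt hr0
  have hrpos : 0 ≤ Real.sqrt (b2 ^ 2 + 24 * a2 * c2) := Real.sqrt_nonneg _
  have hspos : 0 < s := by rw [hs]; positivity
  have hs2 : 2 * c2 * s ^ 2 - b2 * s - 3 * a2 = 0 := by
    subst hs
    field_simp
    have hr' : Real.sqrt (b2 ^ 2 + c2 * 24 * a2) ^ 2 = b2 ^ 2 + c2 * 24 * a2 :=
      Real.sq_sqrt (by positivity)
    nlinarith [hr']
  -- coordinates
  have hn' : n 0 ^ 2 + n 1 ^ 2 + n 2 ^ 2 = 1 := by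
    have h := hn
    simp [dotProduct, Fin.sum_univ_three] at h
    nlinarith [h]
  have htr' : P 0 0 + P 1 1 + P 2 2 = 0 := by
    simpa [Matrix.trace, Matrix.diag, Fin.sum_univ_three] using htr
  have h01 : P 1 0 = P 0 1 := by
    have := congrFun (congrFun hP 0) 1
    simpa [Matrix.transpose_apply] using this
  have h02 : P 2 0 = P 0 2 := by
    have := congrFun (congrFun hP 0) 2
    simpa [Matrix.transpose_apply] using this
  have h12 : P 2 1 = P 1 2 := by
    have := congrFun (congrFun hP 1) 2
    simpa [Matrix.transpose_apply] using this
  have e0 : P 0 0 * n 0 + P 0 1 * n 1 + P 0 2 * n 2 = μ * n 0 := by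
    have h := congrFun hμ 0
    simpa [Matrix.mulVec, dotProduct, Fin.sum_univ_three] using h
  have e1 : P 1 0 * n 0 + P 1 1 * n 1 + P 1 2 * n 2 = μ * n 1 := by
    have h := congrFun hμ 1
    simpa [Matrix.mulVec, dotProduct, Fin.sum_univ_three] using h
  have e2 : P 2 0 * n 0 + P 2 1 * n 1 + P 2 2 * n 2 = μ * n 2 := by
    have h := congrFun hμ 2
    simpa [Matrix.mulVec, dotProduct, Fin.sum_univ_three] using h
  have hPnn : P.mulVec n ⬝ᵥ n = μ := by
    rw [hμ, smul_dotProduct, hn, smul_eq_mul, mul_one]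
  set T : ℝ := (P * P).trace with hTdef
  have hT : T = P 0 0 ^ 2 + P 1 1 ^ 2 + P 2 2 ^ 2
      + 2 * P 0 1 ^ 2 + 2 * P 0 2 ^ 2 + 2 * P 1 2 ^ 2 := by
    simp only [hTdef, Matrix.trace, Matrix.diag, Matrix.mul_apply, Fin.sum_univ_three]
    rw [h01, h02, h12]; ring
  -- Cauchy–Schwarz step: 2T ≥ 3μ²
  have key : μ ^ 2 ≤ (T - μ ^ 2) * 2 := by
    have hS1 : (∑ p : Fin 3 × Fin 3, (P p.1 p.2 - μ * (n p.1 * n p.2)) *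
        ((if p.1 = p.2 then (1:ℝ) else 0) - n p.1 * n p.2)) = -μ := by
      simp only [Fintype.sum_prod_type, Fin.sum_univ_three]
      norm_num [Fin.ext_iff]
      linear_combination htr' - n 0 * e0 - n 1 * e1 - n 2 * e2
        + μ * (n 0 ^ 2 + n 1 ^ 2 + n 2 ^ 2 - 1) * hn'
    have hS2 : (∑ p : Fin 3 × Fin 3, (P p.1 p.2 - μ * (n p.1 * n p.2)) ^ 2)
        = T - μ ^ 2 := by
      simp only [Fintype.sum_prod_type, Fin.sum_univ_three]
      linear_combination (-1 : ℝ) * hT - 2 * μ * n 0 * e0 - 2 * μ * n 1 * e1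
        - 2 * μ * n 2 * e2 + μ ^ 2 * (n 0 ^ 2 + n 1 ^ 2 + n 2 ^ 2 - 1) * hn'
        + (P 1 0 + P 0 1) * h01 + (P 2 0 + P 0 2) * h02 + (P 2 1 + P 1 2) * h12
    have hS3 : (∑ p : Fin 3 × Fin 3,
        ((if p.1 = p.2 then (1:ℝ) else 0) - n p.1 * n p.2) ^ 2) = 2 := by
      simp only [Fintype.sum_prod_type, Fin.sum_univ_three]
      norm_num [Fin.ext_iff]
      linear_combination (n 0 ^ 2 + n 1 ^ 2 + n 2 ^ 2 - 1) * hn'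
    have hCS := Finset.sum_mul_sq_le_sq_mul_sq Finset.univ
      (fun p : Fin 3 × Fin 3 => P p.1 p.2 - μ * (n p.1 * n p.2))
      (fun p : Fin 3 × Fin 3 => (if p.1 = p.2 then (1:ℝ) else 0) - n p.1 * n p.2)
    rw [hS1, hS2, hS3] at hCS
    rw [neg_sq] at hCS
    exact hCS
  have hT0 : 0 ≤ T := by linarith [key, sq_nonneg μ]
  rw [hPnn]
  rcases le_or_gt b2 (c2 * s) with hcase | hcase
  · have h1 : min (2 * a2 + b2 / 3 * s) (b2 * s) ≤ b2 * s := min_le_right _ _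
    have h2 : 0 ≤ 2 * s * (c2 * s - b2) * μ ^ 2 :=
      mul_nonneg (mul_nonneg (by linarith) (by linarith)) (sq_nonneg μ)
    linarith [mul_le_mul_of_nonneg_right h1 hT0, h2]
  · have h1 : min (2 * a2 + b2 / 3 * s) (b2 * s) ≤ 2 * a2 + b2 / 3 * s :=
      min_le_left _ _
    have h3 : b2 * s * T + 2 * s * (c2 * s - b2) * μ ^ 2
        - (2 * a2 + b2 / 3 * s) * T
        = 2 / 3 * s * (b2 - c2 * s) * ((T - μ ^ 2) * 2 - μ ^ 2)
          + 2 / 3 * T * (2 * c2 * s ^ 2 - b2 * s - 3 * a2) := by ring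
    have h4 : 0 ≤ 2 / 3 * s * (b2 - c2 * s) * ((T - μ ^ 2) * 2 - μ ^ 2) := by
      apply mul_nonneg
      · have : 0 ≤ b2 - c2 * s := by linarith
        positivity
      · linarith [key]
    have h5 : 2 / 3 * T * (2 * c2 * s ^ 2 - b2 * s - 3 * a2) = 0 := by
      rw [hs2]; ring
    linarith [mul_le_mul_of_nonneg_right h1 hT0, h3, h4, h5]

end LdGStmt6
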